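/- For η ∈ (0,1] and a complex number δ, define the matrix element M(n,n') = e^{−η|δ|²}·√(n!·n'!)·η^{n+n'}·δⁿ·(δ̄)^{n'}·Σ_{i=0}^{min(n,n')} (1−η)^i / (i!·(n−i)!·(n'−i)!·(η|δ|)^{2i}). Then for all n, the diagonal element satisfies 0 ≤ M(n,n) ≤ 1 (assuming δ ≠ 0). -/

import Mathlib

private lemma pow_div_fact_le_exp {x : ℝ} (hx : 0 ≤ x) (k : ℕ) :
    x ^ k / k.factorial ≤ Real.exp x := by
  calc x ^ k / k.factorial ≤ ∑ i ∈ Finset.range (k + 1), x ^ i / i.factorial := by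
        refine Finset.single_le_sum (f := fun i => x ^ i / (i.factorial : ℝ)) ?_
          (Finset.self_mem_range_succ k)
        intro i _
        positivity
    _ ≤ Real.exp x := Real.sum_le_exp_of_nonneg hx _

theorem stmt_9 (η : ℝ) (hη0 : 0 < η) (hη1 : η ≤ 1) (δ : ℂ) (hδ : δ ≠ 0) (n : ℕ) :
    0 ≤ Real.exp (-η * ‖δ‖ ^ 2) * (n.factorial : ℝ) * (η * ‖δ‖) ^ (2 * n) *
        ∑ i ∈ Finset.range (n + 1),
          (1 - η) ^ i / ((i.factorial : ℝ) * (((n - i).factorial : ℝ)) ^ 2 * (η * ‖δ‖) ^ (2 * i)) ∧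
    Real.exp (-η * ‖δ‖ ^ 2) * (n.factorial : ℝ) * (η * ‖δ‖) ^ (2 * n) *
        ∑ i ∈ Finset.range (n + 1),
          (1 - η) ^ i / ((i.factorial : ℝ) * (((n - i).factorial : ℝ)) ^ 2 * (η * ‖δ‖) ^ (2 * i)) ≤ 1 := by
  set A : ℝ := ‖δ‖ with hA
  have hApos : 0 < A := by
    simpa [hA] using (norm_pos_iff.mpr hδ)
  have hX : 0 < (η * A) ^ 2 := by positivity
  have h1η : 0 ≤ 1 - η := by linarith
  constructor
  · have : 0 ≤ ∑ i ∈ Finset.range (n + 1),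
        (1 - η) ^ i / ((i.factorial : ℝ) * (((n - i).factorial : ℝ)) ^ 2 * (η * A) ^ (2 * i)) := by
      refine Finset.sum_nonneg fun i _ => ?_
      positivity
    positivity
  · -- rewrite the sum in binomial form
    have key : (n.factorial : ℝ) * (η * A) ^ (2 * n) *
        ∑ i ∈ Finset.range (n + 1),
          (1 - η) ^ i / ((i.factorial : ℝ) * (((n - i).factorial : ℝ)) ^ 2 * (η * A) ^ (2 * i))
        = ∑ i ∈ Finset.range (n + 1),
          (n.choose i : ℝ) * (1 - η) ^ i * ((η * A) ^ 2) ^ (n - i) / ((n - i).factorial : ℝ) := by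
      rw [Finset.mul_sum]
      refine Finset.sum_congr rfl fun i hi => ?_
      have hin : i ≤ n := Nat.lt_succ_iff.mp (Finset.mem_range.mp hi)
      have hfact : (n.choose i : ℝ) * i.factorial * (n - i).factorial = n.factorial := by
        exact_mod_cast congrArg (Nat.cast : ℕ → ℝ)
          (Nat.choose_mul_factorial_mul_factorial hin)
      have hpow : (η * A) ^ (2 * n) = (η * A) ^ (2 * i) * ((η * A) ^ 2) ^ (n - i) := by
        rw [← pow_mul, ← pow_add]
        congr 1
        omega
      have hif : (0:ℝ) < i.factorial := by positivity
      have hnf : (0:ℝ) < (n - i).factorial := by positivity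
      have hXi : (0:ℝ) < (η * A) ^ (2 * i) := by positivity
      rw [hpow]
      field_simp
      rw [← hfact]
      ring
    rw [mul_assoc, mul_assoc, ← mul_assoc (n.factorial : ℝ), key]
    have hbound : ∑ i ∈ Finset.range (n + 1),
        (n.choose i : ℝ) * (1 - η) ^ i * ((η * A) ^ 2) ^ (n - i) / ((n - i).factorial : ℝ)
        ≤ Real.exp (η * A ^ 2) * 1 := by
      have hbin : ∑ i ∈ Finset.range (n + 1),
          (n.choose i : ℝ) * ((1 - η) ^ i * η ^ (n - i)) = 1 := by
        have h := add_pow (1 - η) η n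
        rw [sub_add_cancel, one_pow] at h
        calc ∑ i ∈ Finset.range (n + 1), (n.choose i : ℝ) * ((1 - η) ^ i * η ^ (n - i))
            = ∑ i ∈ Finset.range (n + 1), (1 - η) ^ i * η ^ (n - i) * (n.choose i : ℝ) :=
              Finset.sum_congr rfl fun i _ => by ring
          _ = 1 := h.symm
      calc ∑ i ∈ Finset.range (n + 1),
            (n.choose i : ℝ) * (1 - η) ^ i * ((η * A) ^ 2) ^ (n - i) / ((n - i).factorial : ℝ)
          ≤ ∑ i ∈ Finset.range (n + 1),
            (n.choose i : ℝ) * ((1 - η) ^ i * η ^ (n - i)) * Real.exp (η * A ^ 2) := by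
            refine Finset.sum_le_sum fun i _ => ?_
            have h1 : ((η * A) ^ 2) ^ (n - i) = η ^ (n - i) * (η * A ^ 2) ^ (n - i) := by
              ring
            have h2 : (η * A ^ 2) ^ (n - i) / ((n - i).factorial : ℝ) ≤ Real.exp (η * A ^ 2) :=
              pow_div_fact_le_exp (by positivity) _
            have hnn : (0:ℝ) ≤ (n.choose i : ℝ) * (1 - η) ^ i * η ^ (n - i) := by positivity
            calc (n.choose i : ℝ) * (1 - η) ^ i * ((η * A) ^ 2) ^ (n - i) / ((n - i).factorial : ℝ)
                = (n.choose i : ℝ) * (1 - η) ^ i * η ^ (n - i) *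
                    ((η * A ^ 2) ^ (n - i) / ((n - i).factorial : ℝ)) := by
                  rw [h1]; ring
              _ ≤ (n.choose i : ℝ) * (1 - η) ^ i * η ^ (n - i) * Real.exp (η * A ^ 2) := by
                  exact mul_le_mul_of_nonneg_left h2 hnn
              _ = (n.choose i : ℝ) * ((1 - η) ^ i * η ^ (n - i)) * Real.exp (η * A ^ 2) := by ring
        _ = (∑ i ∈ Finset.range (n + 1),
              (n.choose i : ℝ) * ((1 - η) ^ i * η ^ (n - i))) * Real.exp (η * A ^ 2) := by
            rw [Finset.sum_mul]
        _ = Real.exp (η * A ^ 2) * 1 := by rw [hbin]; ring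
    calc Real.exp (-η * A ^ 2) * (∑ i ∈ Finset.range (n + 1),
            (n.choose i : ℝ) * (1 - η) ^ i * ((η * A) ^ 2) ^ (n - i) / ((n - i).factorial : ℝ))
        ≤ Real.exp (-η * A ^ 2) * (Real.exp (η * A ^ 2) * 1) := by
          exact mul_le_mul_of_nonneg_left hbound (Real.exp_nonneg _)
      _ = 1 := by
          rw [mul_one, ← Real.exp_add]; simp
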